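/- Fix η > 0, T > 0 and A ∈ ℝ^{n×m}. With zero initial history h0 = 0, the optimizer's optimal continuous-time reward against the Replicator Dynamics satisfies T·Val(A) ≤ R*_cont(0, T) ≤ T·Val(A) + ln(m)/η, where Val(A) = max_{x ∈ Δ_n} min_{j ∈ [m]} x^⊤ A e_j. -/

import Mathlib

open MeasureTheory

/-- Componentwise cumulative play of a continuous-time strategy: `∫_0^t x(s) ds`. -/
noncomputable def cumX {n : ℕ} (x : ℝ → Fin n → ℝ) (t : ℝ) (k : Fin n) : ℝ :=
  ∫ s in (0:ℝ)..t, x s k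

/-- The Replicator Dynamics learner's mixed strategy at time `t`. -/
noncomputable def contPlay {n m : ℕ} (η : ℝ) (A : Matrix (Fin n) (Fin m) ℝ)
    (h0 : Fin m → ℝ) (x : ℝ → Fin n → ℝ) (t : ℝ) (i : Fin m) : ℝ :=
  Real.exp (η * (h0 i - ∑ k, cumX x t k * A k i)) /
    ∑ j, Real.exp (η * (h0 j - ∑ k, cumX x t k * A k j))

namespace Stmt2Aux
variable {n m : ℕ}

noncomputable def MA (A : Matrix (Fin n) (Fin m) ℝ) : ℝ := ∑ k, ∑ i, |A k i|

lemma MA_nonneg (A : Matrix (Fin n) (Fin m) ℝ) : 0 ≤ MA A :=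
  Finset.sum_nonneg fun _ _ => Finset.sum_nonneg fun _ _ => abs_nonneg _

lemma abs_entry_le (A : Matrix (Fin n) (Fin m) ℝ) (k : Fin n) (i : Fin m) : |A k i| ≤ MA A :=
  calc |A k i| ≤ ∑ i', |A k i'| :=
        Finset.single_le_sum (fun j _ => abs_nonneg (A k j)) (Finset.mem_univ i)
  _ ≤ MA A :=
        Finset.single_le_sum (f := fun k' => ∑ i', |A k' i'|)
          (fun k' _ => Finset.sum_nonneg fun _ _ => abs_nonneg _) (Finset.mem_univ k)

noncomputable def Wf (η : ℝ) (A : Matrix (Fin n) (Fin m) ℝ) (x : ℝ → Fin n → ℝ) (t : ℝ) : ℝ :=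
  ∑ j, Real.exp (η * (0 - ∑ k, cumX x t k * A k j))

lemma Wf_pos (hm : 0 < m) (η : ℝ) (A : Matrix (Fin n) (Fin m) ℝ) (x : ℝ → Fin n → ℝ) (t : ℝ) :
    0 < Wf η A x t :=
  Finset.sum_pos (fun j _ => Real.exp_pos _) ⟨⟨0, hm⟩, Finset.mem_univ _⟩

lemma contPlay_eq (η : ℝ) (A : Matrix (Fin n) (Fin m) ℝ) (x : ℝ → Fin n → ℝ) (t : ℝ) (i : Fin m) :
    contPlay η A (fun _ => 0) x t i
      = Real.exp (η * (0 - ∑ k, cumX x t k * A k i)) / Wf η A x t := rfl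

lemma contPlay_nonneg (hm : 0 < m) (η : ℝ) (A : Matrix (Fin n) (Fin m) ℝ) (x : ℝ → Fin n → ℝ)
    (t : ℝ) (i : Fin m) : 0 ≤ contPlay η A (fun _ => 0) x t i := by
  rw [contPlay_eq]
  exact div_nonneg (Real.exp_pos _).le (Wf_pos hm η A x t).le

lemma contPlay_sum (hm : 0 < m) (η : ℝ) (A : Matrix (Fin n) (Fin m) ℝ) (x : ℝ → Fin n → ℝ)
    (t : ℝ) : ∑ i, contPlay η A (fun _ => 0) x t i = 1 := by
  simp only [contPlay_eq, ← Finset.sum_div]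
  exact div_self (Wf_pos hm η A x t).ne'

noncomputable def Phi (η : ℝ) (A : Matrix (Fin n) (Fin m) ℝ) (x : ℝ → Fin n → ℝ) (t : ℝ) : ℝ :=
  Real.log (Wf η A x t) / η

variable {T : ℝ} {x : ℝ → Fin n → ℝ}
lemma x_comp_bound (hxs : ∀ t ∈ Set.Icc (0:ℝ) T, x t ∈ stdSimplex ℝ (Fin n))
    {s : ℝ} (hs : s ∈ Set.Icc (0:ℝ) T) (k : Fin n) : 0 ≤ x s k ∧ x s k ≤ 1 := by
  obtain ⟨h0, h1⟩ := hxs s hs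
  refine ⟨h0 k, ?_⟩
  calc x s k ≤ ∑ k', x s k' := Finset.single_le_sum (fun j _ => h0 j) (Finset.mem_univ k)
  _ = 1 := h1

lemma x_intInt (hx : Measurable x) (hxs : ∀ t ∈ Set.Icc (0:ℝ) T, x t ∈ stdSimplex ℝ (Fin n))
    {t u : ℝ} (ht : 0 ≤ t) (htu : t ≤ u) (huT : u ≤ T) (k : Fin n) :
    IntervalIntegrable (fun s => x s k) volume t u := by
  rw [intervalIntegrable_iff_integrableOn_Ioc_of_le htu]
  refine Integrable.mono' (g := fun _ => (1:ℝ))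
    (integrableOn_const (C := (1:ℝ)) measure_Ioc_lt_top.ne enorm_ne_top)
    (((measurable_pi_apply k).comp hx).aestronglyMeasurable.restrict) ?_
  refine Filter.eventually_of_mem (self_mem_ae_restrict measurableSet_Ioc) fun s hs => ?_
  have hs' : s ∈ Set.Icc (0:ℝ) T := ⟨le_trans ht hs.1.le, le_trans hs.2 huT⟩
  obtain ⟨h0, h1⟩ := x_comp_bound hxs hs' k
  rw [Real.norm_eq_abs, abs_of_nonneg h0]; exact h1

lemma cumX_diff (hx : Measurable x) (hxs : ∀ t ∈ Set.Icc (0:ℝ) T, x t ∈ stdSimplex ℝ (Fin n))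
    {t u : ℝ} (ht : 0 ≤ t) (htu : t ≤ u) (huT : u ≤ T) (k : Fin n) :
    cumX x u k - cumX x t k = ∫ s in t..u, x s k := by
  have h := intervalIntegral.integral_add_adjacent_intervals
    (x_intInt hx hxs le_rfl ht (le_trans htu huT) k) (x_intInt hx hxs ht htu huT k)
  simp only [cumX]; linarith

lemma cumX_diff_nonneg (hx : Measurable x)
    (hxs : ∀ t ∈ Set.Icc (0:ℝ) T, x t ∈ stdSimplex ℝ (Fin n))
    {t u : ℝ} (ht : 0 ≤ t) (htu : t ≤ u) (huT : u ≤ T) (k : Fin n) :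
    0 ≤ cumX x u k - cumX x t k := by
  rw [cumX_diff hx hxs ht htu huT k]
  refine intervalIntegral.integral_nonneg htu fun s hs => ?_
  exact (x_comp_bound hxs ⟨le_trans ht hs.1, le_trans hs.2 huT⟩ k).1

lemma cumX_diff_sum (hx : Measurable x)
    (hxs : ∀ t ∈ Set.Icc (0:ℝ) T, x t ∈ stdSimplex ℝ (Fin n))
    {t u : ℝ} (ht : 0 ≤ t) (htu : t ≤ u) (huT : u ≤ T) :
    ∑ k, (cumX x u k - cumX x t k) = u - t := by
  have h1 : ∑ k, (cumX x u k - cumX x t k) = ∫ s in t..u, ∑ k, x s k := by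
    rw [intervalIntegral.integral_finset_sum fun k _ => x_intInt hx hxs ht htu huT k]
    exact Finset.sum_congr rfl fun k _ => cumX_diff hx hxs ht htu huT k
  rw [h1]
  have h2 : ∫ s in t..u, ∑ k, x s k = ∫ _ in t..u, (1:ℝ) := by
    refine intervalIntegral.integral_congr fun s hs => ?_
    rw [Set.uIcc_of_le htu] at hs
    exact (hxs s ⟨le_trans ht hs.1, le_trans hs.2 huT⟩).2
  rw [h2]; simp

lemma cumX_zero (k : Fin n) : cumX x 0 k = 0 := by simp [cumX]


variable {m : ℕ} {η : ℝ} {A : Matrix (Fin n) (Fin m) ℝ}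

lemma S_abs_le (hx : Measurable x) (hxs : ∀ t ∈ Set.Icc (0:ℝ) T, x t ∈ stdSimplex ℝ (Fin n))
    {t u : ℝ} (ht : 0 ≤ t) (htu : t ≤ u) (huT : u ≤ T) (j : Fin m) :
    |∑ k, (cumX x u k - cumX x t k) * A k j| ≤ MA A * (u - t) := by
  calc |∑ k, (cumX x u k - cumX x t k) * A k j| ≤ ∑ k, |(cumX x u k - cumX x t k) * A k j| :=
        Finset.abs_sum_le_sum_abs _ _
  _ = ∑ k, (cumX x u k - cumX x t k) * |A k j| := by
        refine Finset.sum_congr rfl fun k _ => ?_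
        rw [abs_mul, abs_of_nonneg (cumX_diff_nonneg hx hxs ht htu huT k)]
  _ ≤ ∑ k, (cumX x u k - cumX x t k) * MA A := by
        refine Finset.sum_le_sum fun k _ => mul_le_mul_of_nonneg_left (abs_entry_le A k j) (cumX_diff_nonneg hx hxs ht htu huT k)
  _ = MA A * (u - t) := by
        rw [← Finset.sum_mul, cumX_diff_sum hx hxs ht htu huT, mul_comm]


lemma exponent_split (t u : ℝ) (j : Fin m) :
    η * (0 - ∑ k, cumX x u k * A k j)
      = η * (0 - ∑ k, cumX x t k * A k j) + (-η * ∑ k, (cumX x u k - cumX x t k) * A k j) := by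
  have h : ∑ k, (cumX x u k - cumX x t k) * A k j
      = ∑ k, cumX x u k * A k j - ∑ k, cumX x t k * A k j := by
    rw [← Finset.sum_sub_distrib]
    exact Finset.sum_congr rfl fun k _ => by ring
  rw [h]; ring

lemma exp_term_le (hη : 0 < η) (hx : Measurable x)
    (hxs : ∀ t ∈ Set.Icc (0:ℝ) T, x t ∈ stdSimplex ℝ (Fin n))
    {t u : ℝ} (ht : 0 ≤ t) (htu : t ≤ u) (huT : u ≤ T) {δ : ℝ}
    (hδ : η * MA A * (u - t) ≤ δ) (j : Fin m) :
    Real.exp (η * (0 - ∑ k, cumX x u k * A k j))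
        ≤ Real.exp δ * Real.exp (η * (0 - ∑ k, cumX x t k * A k j)) ∧
      Real.exp (η * (0 - ∑ k, cumX x t k * A k j))
        ≤ Real.exp δ * Real.exp (η * (0 - ∑ k, cumX x u k * A k j)) := by
  have hS : |η * ∑ k, (cumX x u k - cumX x t k) * A k j| ≤ δ := by
    rw [abs_mul, abs_of_nonneg hη.le]
    calc η * |∑ k, (cumX x u k - cumX x t k) * A k j| ≤ η * (MA A * (u - t)) :=
          mul_le_mul_of_nonneg_left (S_abs_le hx hxs ht htu huT j) hη.le
    _ = η * MA A * (u - t) := by ring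
    _ ≤ δ := hδ
  obtain ⟨h1, h2⟩ := abs_le.1 hS
  constructor
  · rw [exponent_split (x := x) t u j, Real.exp_add, mul_comm (Real.exp δ)]
    exact mul_le_mul_of_nonneg_left (Real.exp_le_exp.2 (by linarith)) (Real.exp_pos _).le
  · rw [exponent_split (x := x) t u j, Real.exp_add, mul_comm (Real.exp δ), mul_assoc,
      ← Real.exp_add]
    nth_rewrite 1 [← mul_one (Real.exp (η * (0 - ∑ k, cumX x t k * A k j)))]
    exact mul_le_mul_of_nonneg_left (by
      rw [← Real.exp_zero]; exact Real.exp_le_exp.2 (by linarith)) (Real.exp_pos _).le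


lemma Wf_comp (hη : 0 < η) (hx : Measurable x)
    (hxs : ∀ t ∈ Set.Icc (0:ℝ) T, x t ∈ stdSimplex ℝ (Fin n))
    {t u : ℝ} (ht : 0 ≤ t) (htu : t ≤ u) (huT : u ≤ T) {δ : ℝ}
    (hδ : η * MA A * (u - t) ≤ δ) :
    Wf η A x u ≤ Real.exp δ * Wf η A x t ∧ Wf η A x t ≤ Real.exp δ * Wf η A x u := by
  constructor
  · rw [Wf, Wf, Finset.mul_sum]
    exact Finset.sum_le_sum fun j _ => (exp_term_le hη hx hxs ht htu huT hδ j).1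
  · rw [Wf, Wf, Finset.mul_sum]
    exact Finset.sum_le_sum fun j _ => (exp_term_le hη hx hxs ht htu huT hδ j).2

lemma div_comp {a b V W δ : ℝ} (ha : 0 ≤ a) (hb : 0 ≤ b) (hV : 0 < V) (hW : 0 < W)
    (h1 : a ≤ Real.exp δ * b) (h2 : W ≤ Real.exp δ * V) :
    a / V ≤ Real.exp (2*δ) * (b / W) := by
  have hiV : Real.exp (-δ) * W ≤ V := by
    rw [Real.exp_neg, inv_mul_le_iff₀ (Real.exp_pos δ)]; exact h2
  calc a / V ≤ (Real.exp δ * b) / (Real.exp (-δ) * W) :=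
        div_le_div₀ (by positivity) h1 (by positivity) hiV
  _ = (Real.exp δ / Real.exp (-δ)) * (b / W) := by rw [div_mul_div_comm]
  _ = Real.exp (2*δ) * (b / W) := by rw [← Real.exp_sub]; ring_nf

lemma y_ratio (hm : 0 < m) (hη : 0 < η) (hx : Measurable x)
    (hxs : ∀ t ∈ Set.Icc (0:ℝ) T, x t ∈ stdSimplex ℝ (Fin n))
    {t u : ℝ} (ht : 0 ≤ t) (htu : t ≤ u) (huT : u ≤ T) {δ : ℝ}
    (hδ : η * MA A * (u - t) ≤ δ) (i : Fin m) :
    contPlay η A (fun _ => 0) x u i ≤ Real.exp (2*δ) * contPlay η A (fun _ => 0) x t i ∧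
      contPlay η A (fun _ => 0) x t i ≤ Real.exp (2*δ) * contPlay η A (fun _ => 0) x u i := by
  have hWt := Wf_pos hm η A x t
  have hWu := Wf_pos hm η A x u
  obtain ⟨he1, he2⟩ := exp_term_le (x := x) hη hx hxs ht htu huT hδ i
  obtain ⟨hw1, hw2⟩ := Wf_comp (x := x) hη hx hxs ht htu huT hδ
  rw [contPlay_eq, contPlay_eq]
  exact ⟨div_comp (Real.exp_pos _).le (Real.exp_pos _).le hWu hWt he1 hw2,
    div_comp (Real.exp_pos _).le (Real.exp_pos _).le hWt hWu he2 hw1⟩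

lemma y_close (hm : 0 < m) (hη : 0 < η) (hx : Measurable x)
    (hxs : ∀ t ∈ Set.Icc (0:ℝ) T, x t ∈ stdSimplex ℝ (Fin n))
    {t u : ℝ} (ht : 0 ≤ t) (htu : t ≤ u) (huT : u ≤ T) {δ : ℝ}
    (hδ : η * MA A * (u - t) ≤ δ) (i : Fin m) :
    |contPlay η A (fun _ => 0) x u i - contPlay η A (fun _ => 0) x t i|
      ≤ (Real.exp (2*δ) - 1) * contPlay η A (fun _ => 0) x t i := by
  obtain ⟨r1, r2⟩ := y_ratio hm hη hx hxs ht htu huT hδ i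
  have hyt := contPlay_nonneg hm η A x t i
  have hyu := contPlay_nonneg hm η A x u i
  have hexp : (2:ℝ) ≤ Real.exp (2*δ) + Real.exp (-(2*δ)) := by
    have a1 := Real.add_one_le_exp (2*δ)
    have a2 := Real.add_one_le_exp (-(2*δ))
    linarith
  rw [abs_sub_le_iff]
  constructor
  · linarith
  · -- y t - y u ≤ (e^{2δ}-1) y t ; from r2 : y t ≤ e^{2δ} y u
    have h3 : Real.exp (-(2*δ)) * contPlay η A (fun _ => 0) x t i
        ≤ contPlay η A (fun _ => 0) x u i := by
      rw [Real.exp_neg, inv_mul_le_iff₀ (Real.exp_pos _)]; exact r2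
    nlinarith [Real.exp_pos (2*δ)]


lemma mgf_step (hm : 0 < m) (hη : 0 < η) (hx : Measurable x)
    (hxs : ∀ t ∈ Set.Icc (0:ℝ) T, x t ∈ stdSimplex ℝ (Fin n))
    {t u : ℝ} (ht : 0 ≤ t) (htu : t ≤ u) (huT : u ≤ T)
    (hδ1 : η * MA A * (u - t) ≤ 1) :
    ∑ i, (∑ k, (cumX x u k - cumX x t k) * A k i) * contPlay η A (fun _ => 0) x t i
      ≤ Phi η A x t - Phi η A x u + (η * MA A * (u - t))^2 / η := by
  set δ := η * MA A * (u - t) with hδdef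
  have hδ0 : 0 ≤ δ := by
    have := MA_nonneg A
    have : 0 ≤ η * MA A := by positivity
    nlinarith [sub_nonneg.2 htu]
  set p : Fin m → ℝ := fun i => contPlay η A (fun _ => 0) x t i with hp
  set S : Fin m → ℝ := fun i => ∑ k, (cumX x u k - cumX x t k) * A k i with hS
  have hz : ∀ i, |(-η) * S i| ≤ δ := by
    intro i
    rw [abs_mul, abs_neg, abs_of_nonneg hη.le, hδdef]
    calc η * |S i| ≤ η * (MA A * (u - t)) :=
          mul_le_mul_of_nonneg_left (S_abs_le hx hxs ht htu huT i) hη.le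
    _ = η * MA A * (u - t) := by ring
  have hez : ∀ i, Real.exp ((-η) * S i) ≤ 1 + (-η) * S i + δ^2 := by
    intro i
    set z := (-η) * S i
    have hz1 : |z| ≤ 1 := le_trans (hz i) hδ1
    have hb := Real.exp_bound hz1 (n := 2) (by norm_num)
    have hsum : ∑ m ∈ Finset.range 2, z ^ m / m.factorial = 1 + z := by
      simp [Finset.sum_range_succ]
    rw [hsum] at hb
    have h2 : |z| ^ 2 ≤ δ ^ 2 := by
      have := hz i
      exact pow_le_pow_left₀ (abs_nonneg z) this 2
    norm_num [Nat.factorial] at hb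
    have h4 := (abs_sub_le_iff.1 hb).1
    nlinarith [abs_nonneg z, sq_abs z]
  have hWt := Wf_pos hm η A x t
  have hWu := Wf_pos hm η A x u
  have hpz : ∀ i, Real.exp (η * (0 - ∑ k, cumX x t k * A k i)) = p i * Wf η A x t := by
    intro i
    simp only [hp, contPlay_eq]
    rw [div_mul_cancel₀ _ hWt.ne']
  have hWle : Wf η A x u ≤ Wf η A x t * (1 + (∑ i, p i * ((-η) * S i)) + δ^2) := by
    calc Wf η A x u = ∑ i, Real.exp (η * (0 - ∑ k, cumX x t k * A k i)) * Real.exp ((-η) * S i) := by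
          rw [Wf]
          exact Finset.sum_congr rfl fun i _ => by
            rw [← Real.exp_add, ← exponent_split (x := x) t u i]
    _ ≤ ∑ i, Real.exp (η * (0 - ∑ k, cumX x t k * A k i)) * (1 + (-η) * S i + δ^2) := by
          refine Finset.sum_le_sum fun i _ =>
            mul_le_mul_of_nonneg_left (hez i) (Real.exp_pos _).le
    _ = Wf η A x t * (1 + (∑ i, p i * ((-η) * S i)) + δ^2) := by
          have : ∀ i : Fin m, Real.exp (η * (0 - ∑ k, cumX x t k * A k i)) * (1 + (-η) * S i + δ^2)
              = Wf η A x t * (p i * (1 + (-η) * S i + δ^2)) := by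
            intro i; rw [hpz i]; ring
          rw [Finset.sum_congr rfl fun i _ => this i, ← Finset.mul_sum]
          congr 1
          have hps : ∑ i, p i = 1 := contPlay_sum hm η A x t
          calc ∑ i, p i * (1 + (-η) * S i + δ^2)
              = (∑ i, p i) + (∑ i, p i * ((-η) * S i)) + (∑ i, p i) * δ^2 := by
                rw [Finset.sum_mul, ← Finset.sum_add_distrib, ← Finset.sum_add_distrib]
                exact Finset.sum_congr rfl fun i _ => by ring
          _ = 1 + (∑ i, p i * ((-η) * S i)) + δ^2 := by rw [hps]; ring
  have hC : 0 < 1 + (∑ i, p i * ((-η) * S i)) + δ^2 := by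
    by_contra h
    push_neg at h
    nlinarith
  have hlog : Real.log (Wf η A x u)
      ≤ Real.log (Wf η A x t) + ((∑ i, p i * ((-η) * S i)) + δ^2) := by
    calc Real.log (Wf η A x u)
        ≤ Real.log (Wf η A x t * (1 + (∑ i, p i * ((-η) * S i)) + δ^2)) :=
          Real.log_le_log hWu hWle
    _ = Real.log (Wf η A x t) + Real.log (1 + (∑ i, p i * ((-η) * S i)) + δ^2) := by
          rw [Real.log_mul hWt.ne' hC.ne']
    _ ≤ Real.log (Wf η A x t) + ((∑ i, p i * ((-η) * S i)) + δ^2) := by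
          have := Real.log_le_sub_one_of_pos hC
          linarith
  have hsum_sp : ∑ i, p i * ((-η) * S i) = -η * ∑ i, S i * p i := by
    rw [Finset.mul_sum]
    exact Finset.sum_congr rfl fun i _ => by ring
  rw [hsum_sp] at hlog
  have key : η * (∑ i, S i * p i) ≤ Real.log (Wf η A x t) - Real.log (Wf η A x u) + δ^2 := by
    linarith
  have final : ∑ i, S i * p i
      ≤ (Real.log (Wf η A x t) - Real.log (Wf η A x u) + δ^2) / η := by
    rw [le_div_iff₀ hη]
    linarith
  refine final.trans_eq ?_
  rw [Phi, Phi]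
  ring


lemma cumX_continuousOn (hx : Measurable x)
    (hxs : ∀ t ∈ Set.Icc (0:ℝ) T, x t ∈ stdSimplex ℝ (Fin n)) (hT : 0 ≤ T) (k : Fin n) :
    ContinuousOn (fun t => cumX x t k) (Set.Icc 0 T) := by
  have hint : IntegrableOn (fun s => x s k) (Set.Icc 0 T) volume := by
    rw [integrableOn_Icc_iff_integrableOn_Ioc]
    exact (intervalIntegrable_iff_integrableOn_Ioc_of_le hT).1
      (x_intInt hx hxs le_rfl hT le_rfl k)
  refine (intervalIntegral.continuousOn_primitive hint).congr fun t ht => ?_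
  simp only [cumX]
  rw [intervalIntegral.integral_of_le ht.1]

lemma y_continuousOn (hm : 0 < m) (hx : Measurable x)
    (hxs : ∀ t ∈ Set.Icc (0:ℝ) T, x t ∈ stdSimplex ℝ (Fin n)) (hT : 0 ≤ T) (i : Fin m) :
    ContinuousOn (fun t => contPlay η A (fun _ => 0) x t i) (Set.Icc 0 T) := by
  have hnum : ∀ j : Fin m, ContinuousOn
      (fun t => Real.exp (η * (0 - ∑ k, cumX x t k * A k j))) (Set.Icc 0 T) := by
    intro j
    refine Real.continuous_exp.comp_continuousOn ?_
    refine ContinuousOn.mul continuousOn_const ?_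
    refine ContinuousOn.sub continuousOn_const ?_
    exact continuousOn_finset_sum _ fun k _ =>
      (cumX_continuousOn hx hxs hT k).mul continuousOn_const
  simp only [contPlay_eq]
  exact (hnum i).div (continuousOn_finset_sum _ fun j _ => hnum j)
    fun t _ => (Wf_pos hm η A x t).ne'

lemma r_integrableOn (hm : 0 < m) (hx : Measurable x)
    (hxs : ∀ t ∈ Set.Icc (0:ℝ) T, x t ∈ stdSimplex ℝ (Fin n)) (hT : 0 ≤ T) :
    IntegrableOn
      (fun s => ∑ k, ∑ i, x s k * A k i * contPlay η A (fun _ => 0) x s i)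
      (Set.Icc 0 T) volume := by
  refine Integrable.mono' (g := fun _ => MA A)
    (integrableOn_const (C := MA A) measure_Icc_lt_top.ne enorm_ne_top) ?_ ?_
  · refine Finset.aestronglyMeasurable_fun_sum _ fun k _ => ?_
    refine Finset.aestronglyMeasurable_fun_sum _ fun i _ => ?_
    refine AEStronglyMeasurable.mul ?_ ?_
    · exact (((measurable_pi_apply k).comp hx).aestronglyMeasurable.restrict).mul
        aestronglyMeasurable_const
    · exact ((y_continuousOn hm hx hxs hT i).aestronglyMeasurable measurableSet_Icc)
  · refine Filter.eventually_of_mem (self_mem_ae_restrict measurableSet_Icc) fun s hs => ?_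
    have hy0 : ∀ i, 0 ≤ contPlay η A (fun _ => 0) x s i := contPlay_nonneg hm η A x s
    have hx0 : ∀ k, 0 ≤ x s k := fun k => (x_comp_bound hxs hs k).1
    rw [Real.norm_eq_abs]
    calc |∑ k, ∑ i, x s k * A k i * contPlay η A (fun _ => 0) x s i|
        ≤ ∑ k, |∑ i, x s k * A k i * contPlay η A (fun _ => 0) x s i| :=
          Finset.abs_sum_le_sum_abs _ _
    _ ≤ ∑ k, ∑ i, |x s k * A k i * contPlay η A (fun _ => 0) x s i| :=
          Finset.sum_le_sum fun k _ => Finset.abs_sum_le_sum_abs _ _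
    _ = ∑ k, ∑ i, x s k * |A k i| * contPlay η A (fun _ => 0) x s i := by
          refine Finset.sum_congr rfl fun k _ => Finset.sum_congr rfl fun i _ => ?_
          rw [abs_mul, abs_mul, abs_of_nonneg (hx0 k), abs_of_nonneg (hy0 i)]
    _ ≤ ∑ k, ∑ i, x s k * MA A * contPlay η A (fun _ => 0) x s i := by
          refine Finset.sum_le_sum fun k _ => Finset.sum_le_sum fun i _ => ?_
          exact mul_le_mul_of_nonneg_right
            (mul_le_mul_of_nonneg_left (abs_entry_le A k i) (hx0 k)) (hy0 i)
    _ = MA A := by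
          have h1 : ∀ k : Fin n, ∑ i, x s k * MA A * contPlay η A (fun _ => 0) x s i
              = x s k * MA A := by
            intro k
            rw [← Finset.mul_sum, contPlay_sum hm, mul_one]
          rw [Finset.sum_congr rfl fun k _ => h1 k, ← Finset.sum_mul, (hxs s hs).2, one_mul]

lemma r_intInt (hm : 0 < m) (hx : Measurable x)
    (hxs : ∀ t ∈ Set.Icc (0:ℝ) T, x t ∈ stdSimplex ℝ (Fin n))
    {t u : ℝ} (ht : 0 ≤ t) (htu : t ≤ u) (huT : u ≤ T) :
    IntervalIntegrable
      (fun s => ∑ k, ∑ i, x s k * A k i * contPlay η A (fun _ => 0) x s i) volume t u := by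
  rw [intervalIntegrable_iff_integrableOn_Ioc_of_le htu]
  exact (r_integrableOn hm hx hxs (le_trans (le_trans ht htu) huT)).mono_set
    fun s hs => ⟨le_trans ht hs.1.le, le_trans hs.2 huT⟩


lemma interval_step (hm : 0 < m) (hη : 0 < η) (hx : Measurable x)
    (hxs : ∀ t ∈ Set.Icc (0:ℝ) T, x t ∈ stdSimplex ℝ (Fin n))
    {t u : ℝ} (ht : 0 ≤ t) (htu : t ≤ u) (huT : u ≤ T)
    (hδ1 : η * MA A * (u - t) ≤ 1) :
    (∫ s in t..u, ∑ k, ∑ i, x s k * A k i * contPlay η A (fun _ => 0) x s i)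
      ≤ Phi η A x t - Phi η A x u + (η * MA A * (u - t))^2 / η
        + (Real.exp (2*(η * MA A * (u - t))) - 1) * MA A * (u - t) := by
  set δ := η * MA A * (u - t) with hδdef
  have hδ0 : 0 ≤ δ := by
    have h0 : 0 ≤ η * MA A := mul_nonneg hη.le (MA_nonneg A)
    rw [hδdef]; nlinarith [sub_nonneg.2 htu]
  have hE : 0 ≤ Real.exp (2*δ) - 1 := by nlinarith [Real.add_one_le_exp (2*δ)]
  -- pointwise comparison on [t,u]
  have hpt : ∀ s ∈ Set.Icc t u,
      ∑ k, ∑ i, x s k * A k i * contPlay η A (fun _ => 0) x s i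
        ≤ (∑ k, ∑ i, x s k * (A k i * contPlay η A (fun _ => 0) x t i))
          + (Real.exp (2*δ) - 1) * MA A := by
    intro s hs
    have hsIcc : s ∈ Set.Icc (0:ℝ) T := ⟨le_trans ht hs.1, le_trans hs.2 huT⟩
    have hclose : ∀ i, |contPlay η A (fun _ => 0) x s i - contPlay η A (fun _ => 0) x t i|
        ≤ (Real.exp (2*δ) - 1) * contPlay η A (fun _ => 0) x t i := by
      intro i
      refine y_close hm hη hx hxs ht hs.1 hsIcc.2 ?_ i
      rw [hδdef]
      have h0 : 0 ≤ η * MA A := mul_nonneg hη.le (MA_nonneg A)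
      nlinarith [hs.2]
    have hx0 : ∀ k, 0 ≤ x s k := fun k => (x_comp_bound hxs hsIcc k).1
    have hy0 : ∀ i, 0 ≤ contPlay η A (fun _ => 0) x t i := contPlay_nonneg hm η A x t
    have hdiff : ∑ k, ∑ i, x s k * A k i * contPlay η A (fun _ => 0) x s i
          - ∑ k, ∑ i, x s k * (A k i * contPlay η A (fun _ => 0) x t i)
        = ∑ k, ∑ i, x s k * A k i *
            (contPlay η A (fun _ => 0) x s i - contPlay η A (fun _ => 0) x t i) := by
      rw [← Finset.sum_sub_distrib]
      refine Finset.sum_congr rfl fun k _ => ?_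
      rw [← Finset.sum_sub_distrib]
      exact Finset.sum_congr rfl fun i _ => by ring
    have habs : ∑ k, ∑ i, x s k * A k i *
          (contPlay η A (fun _ => 0) x s i - contPlay η A (fun _ => 0) x t i)
        ≤ (Real.exp (2*δ) - 1) * MA A := by
      calc ∑ k, ∑ i, x s k * A k i *
            (contPlay η A (fun _ => 0) x s i - contPlay η A (fun _ => 0) x t i)
          ≤ ∑ k, ∑ i, x s k * MA A *
              ((Real.exp (2*δ) - 1) * contPlay η A (fun _ => 0) x t i) := by
            refine Finset.sum_le_sum fun k _ => Finset.sum_le_sum fun i _ => ?_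
            calc x s k * A k i *
                  (contPlay η A (fun _ => 0) x s i - contPlay η A (fun _ => 0) x t i)
                ≤ |x s k * A k i *
                  (contPlay η A (fun _ => 0) x s i - contPlay η A (fun _ => 0) x t i)| :=
                  le_abs_self _
            _ = x s k * |A k i| *
                  |contPlay η A (fun _ => 0) x s i - contPlay η A (fun _ => 0) x t i| := by
                  rw [abs_mul, abs_mul, abs_of_nonneg (hx0 k)]
            _ ≤ x s k * MA A *
                  ((Real.exp (2*δ) - 1) * contPlay η A (fun _ => 0) x t i) := by
                  refine mul_le_mul (mul_le_mul_of_nonneg_left (abs_entry_le A k i) (hx0 k))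
                    (hclose i) (abs_nonneg _) ?_
                  exact mul_nonneg (hx0 k) (MA_nonneg A)
      _ = (Real.exp (2*δ) - 1) * MA A := by
            have h1 : ∀ k : Fin n, ∑ i, x s k * MA A *
                  ((Real.exp (2*δ) - 1) * contPlay η A (fun _ => 0) x t i)
                = x s k * MA A * (Real.exp (2*δ) - 1) := by
              intro k
              rw [← Finset.mul_sum, ← Finset.mul_sum, contPlay_sum hm, mul_one]
            rw [Finset.sum_congr rfl fun k _ => h1 k, ← Finset.sum_mul, ← Finset.sum_mul,
              (hxs s hsIcc).2, one_mul]
            ring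
    linarith [hdiff, habs]
  have hIntRt : IntervalIntegrable
      (fun s => ∑ k, ∑ i, x s k * (A k i * contPlay η A (fun _ => 0) x t i)) volume t u := by
    have heq : (fun s => ∑ k, ∑ i, x s k * (A k i * contPlay η A (fun _ => 0) x t i))
        = ∑ k : Fin n, fun s => x s k * (∑ i, A k i * contPlay η A (fun _ => 0) x t i) := by
      funext s
      rw [Finset.sum_apply]
      exact Finset.sum_congr rfl fun k _ => (Finset.mul_sum _ _ _).symm
    rw [heq]
    exact IntervalIntegrable.sum _ fun k _ => (x_intInt hx hxs ht htu huT k).mul_const _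
  have hInt2 : IntervalIntegrable
      (fun s => (∑ k, ∑ i, x s k * (A k i * contPlay η A (fun _ => 0) x t i))
        + (Real.exp (2*δ) - 1) * MA A) volume t u :=
    hIntRt.add intervalIntegrable_const
  have hmono := intervalIntegral.integral_mono_on htu (r_intInt hm hx hxs ht htu huT) hInt2 hpt
  have hsplit : (∫ s in t..u, ((∑ k, ∑ i, x s k * (A k i * contPlay η A (fun _ => 0) x t i))
        + (Real.exp (2*δ) - 1) * MA A))
      = (∫ s in t..u, ∑ k, ∑ i, x s k * (A k i * contPlay η A (fun _ => 0) x t i))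
        + (Real.exp (2*δ) - 1) * MA A * (u - t) := by
    rw [intervalIntegral.integral_add hIntRt intervalIntegrable_const,
      intervalIntegral.integral_const, smul_eq_mul]
    ring
  have hval : (∫ s in t..u, ∑ k, ∑ i, x s k * (A k i * contPlay η A (fun _ => 0) x t i))
      = ∑ i, (∑ k, (cumX x u k - cumX x t k) * A k i) * contPlay η A (fun _ => 0) x t i := by
    have e1 : (∫ s in t..u, ∑ k, ∑ i, x s k * (A k i * contPlay η A (fun _ => 0) x t i))
        = ∑ k, ∫ s in t..u, x s k * (∑ i, A k i * contPlay η A (fun _ => 0) x t i) := by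
      rw [← intervalIntegral.integral_finset_sum]
      · refine intervalIntegral.integral_congr fun s _ => ?_
        exact Finset.sum_congr rfl fun k _ => by rw [← Finset.mul_sum]
      · intro k _
        exact (x_intInt hx hxs ht htu huT k).mul_const _
    rw [e1]
    have e2 : ∀ k : Fin n, (∫ s in t..u, x s k * (∑ i, A k i * contPlay η A (fun _ => 0) x t i))
        = (cumX x u k - cumX x t k) * (∑ i, A k i * contPlay η A (fun _ => 0) x t i) := by
      intro k
      rw [intervalIntegral.integral_mul_const, cumX_diff hx hxs ht htu huT k]
    rw [Finset.sum_congr rfl fun k _ => e2 k]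
    calc ∑ k, (cumX x u k - cumX x t k) * (∑ i, A k i * contPlay η A (fun _ => 0) x t i)
        = ∑ k, ∑ i, (cumX x u k - cumX x t k) * A k i * contPlay η A (fun _ => 0) x t i := by
          refine Finset.sum_congr rfl fun k _ => ?_
          rw [Finset.mul_sum]
          exact Finset.sum_congr rfl fun i _ => by ring
    _ = ∑ i, ∑ k, (cumX x u k - cumX x t k) * A k i * contPlay η A (fun _ => 0) x t i :=
          Finset.sum_comm
    _ = ∑ i, (∑ k, (cumX x u k - cumX x t k) * A k i) * contPlay η A (fun _ => 0) x t i := by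
          refine Finset.sum_congr rfl fun i _ => ?_
          rw [Finset.sum_mul]
  have hmgf := mgf_step hm hη hx hxs ht htu huT hδ1
  rw [hsplit, hval] at hmono
  calc (∫ s in t..u, ∑ k, ∑ i, x s k * A k i * contPlay η A (fun _ => 0) x s i)
      ≤ (∑ i, (∑ k, (cumX x u k - cumX x t k) * A k i) * contPlay η A (fun _ => 0) x t i)
        + (Real.exp (2*δ) - 1) * MA A * (u - t) := hmono
  _ ≤ (Phi η A x t - Phi η A x u + δ^2 / η) + (Real.exp (2*δ) - 1) * MA A * (u - t) := by
        linarith [hmgf]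
  _ = Phi η A x t - Phi η A x u + δ^2 / η + (Real.exp (2*δ) - 1) * MA A * (u - t) := by ring


lemma integral_le_N (hm : 0 < m) (hη : 0 < η) (hx : Measurable x)
    (hxs : ∀ t ∈ Set.Icc (0:ℝ) T, x t ∈ stdSimplex ℝ (Fin n)) (hT : 0 < T)
    (N : ℕ) (hN : η * MA A * (T/(N+1)) ≤ 1) :
    (∫ t in (0:ℝ)..T, ∑ k, ∑ i, x t k * A k i * contPlay η A (fun _ => 0) x t i)
      ≤ Phi η A x 0 - Phi η A x T
        + ((N:ℝ)+1) * ((η * MA A * (T/(N+1)))^2 / η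
          + (Real.exp (2*(η * MA A * (T/(N+1)))) - 1) * MA A * (T/(N+1))) := by
  set d := T/((N:ℝ)+1) with hd
  have hNpos : (0:ℝ) < (N:ℝ)+1 := by positivity
  have hdpos : 0 < d := by rw [hd]; positivity
  set a : ℕ → ℝ := fun i => i * d with ha
  have ha0 : a 0 = 0 := by simp [ha]
  have haN : a (N+1) = T := by
    rw [ha]
    push_cast
    field_simp [hd]
    rw [hd]; field_simp
  have hstep : ∀ i : ℕ, a (i+1) - a i = d := by
    intro i; rw [ha]; push_cast; ring
  have hmono : ∀ i : ℕ, a i ≤ a (i+1) := by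
    intro i; rw [ha]; push_cast; nlinarith [hdpos]
  have hbounds : ∀ i : ℕ, i < N+1 → 0 ≤ a i ∧ a (i+1) ≤ T := by
    intro i hi
    constructor
    · rw [ha]; positivity
    · rw [ha, ← haN, ha]
      push_cast
      have : ((i:ℝ)+1) ≤ (N:ℝ)+1 := by exact_mod_cast Nat.succ_le_succ (Nat.lt_succ_iff.1 hi)
      nlinarith [hdpos]
  have hint : ∀ i < N+1, IntervalIntegrable
      (fun t => ∑ k, ∑ i, x t k * A k i * contPlay η A (fun _ => 0) x t i)
      volume (a i) (a (i+1)) := by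
    intro i hi
    exact r_intInt hm hx hxs (hbounds i hi).1 (hmono i) (hbounds i hi).2
  have hsum := intervalIntegral.sum_integral_adjacent_intervals hint
  rw [ha0, haN] at hsum
  rw [← hsum]
  have hterm : ∀ i ∈ Finset.range (N+1),
      (∫ t in (a i)..(a (i+1)), ∑ k, ∑ i, x t k * A k i * contPlay η A (fun _ => 0) x t i)
        ≤ (Phi η A x (a i) - Phi η A x (a (i+1)))
          + ((η * MA A * d)^2 / η + (Real.exp (2*(η * MA A * d)) - 1) * MA A * d) := by
    intro i hi
    rw [Finset.mem_range] at hi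
    have h := interval_step hm hη hx hxs (hbounds i hi).1 (hmono i) (hbounds i hi).2
      (by rw [hstep i]; exact hN)
    rw [hstep i] at h
    linarith
  calc ∑ i ∈ Finset.range (N+1),
        (∫ t in (a i)..(a (i+1)), ∑ k, ∑ i, x t k * A k i * contPlay η A (fun _ => 0) x t i)
      ≤ ∑ i ∈ Finset.range (N+1), ((Phi η A x (a i) - Phi η A x (a (i+1)))
          + ((η * MA A * d)^2 / η + (Real.exp (2*(η * MA A * d)) - 1) * MA A * d)) :=
        Finset.sum_le_sum hterm
  _ = (Phi η A x 0 - Phi η A x T)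
        + ((N:ℝ)+1) * ((η * MA A * d)^2 / η + (Real.exp (2*(η * MA A * d)) - 1) * MA A * d) := by
        rw [Finset.sum_add_distrib, Finset.sum_range_sub' (fun i => Phi η A x (a i)),
          Finset.sum_const, Finset.card_range, nsmul_eq_mul, ha0, haN]
        push_cast
        ring
  _ = _ := by rw [hd]


lemma integral_le_phi (hm : 0 < m) (hη : 0 < η) (hx : Measurable x)
    (hxs : ∀ t ∈ Set.Icc (0:ℝ) T, x t ∈ stdSimplex ℝ (Fin n)) (hT : 0 < T) :
    (∫ t in (0:ℝ)..T, ∑ k, ∑ i, x t k * A k i * contPlay η A (fun _ => 0) x t i)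
      ≤ Phi η A x 0 - Phi η A x T := by
  set c1 := η * MA A with hc1
  have hc10 : 0 ≤ c1 := mul_nonneg hη.le (MA_nonneg A)
  set L := Phi η A x 0 - Phi η A x T with hL
  set G : ℝ → ℝ := fun d => L + c1^2*T/η*d + (Real.exp (2*(c1*d)) - 1) * MA A * T with hG
  have hGcont : Continuous G := by
    rw [hG]
    refine ((continuous_const.add (continuous_const.mul continuous_id)).add ?_)
    refine Continuous.mul (Continuous.mul ?_ continuous_const) continuous_const
    refine Continuous.sub ?_ continuous_const
    exact Real.continuous_exp.comp (continuous_const.mul (continuous_const.mul continuous_id))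
  have hd_tendsto : Filter.Tendsto (fun N : ℕ => T/((N:ℝ)+1)) Filter.atTop (nhds 0) := by
    have h := tendsto_one_div_add_atTop_nhds_zero_nat.const_mul T
    rw [mul_zero] at h
    refine h.congr fun N => ?_
    rw [mul_one_div]
  have hF_tendsto : Filter.Tendsto (fun N : ℕ => G (T/((N:ℝ)+1))) Filter.atTop (nhds L) := by
    have := (hGcont.tendsto 0).comp hd_tendsto
    have hG0 : G 0 = L := by rw [hG]; simp
    rwa [hG0] at this
  refine ge_of_tendsto hF_tendsto ?_
  rw [Filter.eventually_atTop]
  refine ⟨⌈c1*T⌉₊, fun N hN => ?_⟩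
  have hNpos : (0:ℝ) < (N:ℝ)+1 := by positivity
  have hsmall : c1 * (T/((N:ℝ)+1)) ≤ 1 := by
    rw [mul_div_assoc']
    rw [div_le_one hNpos]
    calc c1 * T ≤ (⌈c1*T⌉₊ : ℝ) := Nat.le_ceil _
    _ ≤ (N:ℝ) := by exact_mod_cast hN
    _ ≤ (N:ℝ)+1 := by linarith
  have h := integral_le_N hm hη hx hxs hT N (by rw [← hc1]; exact hsmall)
  refine h.trans ?_
  rw [hG, hL]
  have hd : (0:ℝ) < T/((N:ℝ)+1) := by positivity
  have hNe : ((N:ℝ)+1) ≠ 0 := hNpos.ne'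
  have key : ((N:ℝ)+1) * ((c1 * (T/((N:ℝ)+1)))^2 / η
        + (Real.exp (2*(c1*(T/((N:ℝ)+1)))) - 1) * MA A * (T/((N:ℝ)+1)))
      = c1^2*T/η*(T/((N:ℝ)+1)) + (Real.exp (2*(c1*(T/((N:ℝ)+1)))) - 1) * MA A * T := by
    field_simp
  rw [← hc1] at *
  rw [key]
  ring_nf
  exact le_refl _

lemma Phi_zero (hm : 0 < m) (hη : 0 < η) :
    Phi η A x 0 = Real.log m / η := by
  have : Wf η A x 0 = m := by
    simp [Wf, cumX_zero]
  rw [Phi, this]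

end Stmt2Aux

/-- The optimizer's continuous-time reward against the Replicator Dynamics. -/
noncomputable def Rcont {n m : ℕ} (η : ℝ) (A : Matrix (Fin n) (Fin m) ℝ)
    (h0 : Fin m → ℝ) (T : ℝ) (x : ℝ → Fin n → ℝ) : ℝ :=
  ∫ t in (0:ℝ)..T, ∑ k, ∑ i, x t k * A k i * contPlay η A h0 x t i

/-- The optimal continuous-time reward: supremum over all measurable strategies taking
values in the simplex on `[0,T]`. -/
noncomputable def RcontStar {n m : ℕ} (η : ℝ) (A : Matrix (Fin n) (Fin m) ℝ)
    (h0 : Fin m → ℝ) (T : ℝ) : ℝ :=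
  sSup {r | ∃ x : ℝ → Fin n → ℝ, Measurable x ∧
    (∀ t ∈ Set.Icc (0:ℝ) T, x t ∈ stdSimplex ℝ (Fin n)) ∧ r = Rcont η A h0 T x}

/-- The value of the zero-sum game for the optimizer:
`Val(A) = max_{x ∈ Δ_n} min_{j} xᵀ A e_j`. -/
noncomputable def gameValue {n m : ℕ} (A : Matrix (Fin n) (Fin m) ℝ) : ℝ :=
  sSup {v | ∃ x ∈ stdSimplex ℝ (Fin n), v = ⨅ j, ∑ k, x k * A k j}

namespace Stmt2Aux
variable {n m : ℕ} {T : ℝ} {x : ℝ → Fin n → ℝ} {η : ℝ} {A : Matrix (Fin n) (Fin m) ℝ}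

lemma uniform_mem (hn : 0 < n) : (fun _ : Fin n => (n:ℝ)⁻¹) ∈ stdSimplex ℝ (Fin n) := by
  constructor
  · intro i
    positivity
  · rw [Finset.sum_const, Finset.card_univ, Fintype.card_fin, nsmul_eq_mul]
    field_simp

lemma valSet_mem_le (hm : 0 < m) {v : ℝ}
    (hv : v ∈ {v | ∃ x ∈ stdSimplex ℝ (Fin n), v = ⨅ j, ∑ k, x k * A k j}) : v ≤ MA A := by
  obtain ⟨xs, hxs, rfl⟩ := hv
  set j0 : Fin m := ⟨0, hm⟩
  calc (⨅ j, ∑ k, xs k * A k j) ≤ ∑ k, xs k * A k j0 :=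
        ciInf_le (Set.Finite.bddBelow (Set.finite_range _)) j0
  _ ≤ ∑ k, xs k * MA A := by
        refine Finset.sum_le_sum fun k _ => ?_
        exact mul_le_mul_of_nonneg_left ((le_abs_self _).trans (abs_entry_le A k j0)) (hxs.1 k)
  _ = MA A := by rw [← Finset.sum_mul, hxs.2, one_mul]

lemma valSet_nonempty (hn : 0 < n) :
    Set.Nonempty {v | ∃ x ∈ stdSimplex ℝ (Fin n), v = ⨅ j, ∑ k, x k * A k j} :=
  ⟨_, ⟨_, uniform_mem hn, rfl⟩⟩

lemma Rcont_le (hn : 0 < n) (hm : 0 < m) (hη : 0 < η) (hT : 0 < T)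
    (hx : Measurable x) (hxs : ∀ t ∈ Set.Icc (0:ℝ) T, x t ∈ stdSimplex ℝ (Fin n)) :
    Rcont η A (fun _ => 0) T x ≤ T * gameValue A + Real.log m / η := by
  have hmain := integral_le_phi (A := A) hm hη hx hxs hT
  have h0 := Phi_zero (x := x) (A := A) hm hη
  -- lower bound on Phi at time T
  set q : Fin n → ℝ := fun k => cumX x T k / T with hq
  have hcum0 : ∀ k, 0 ≤ cumX x T k := by
    intro k
    have := cumX_diff_nonneg hx hxs le_rfl hT.le le_rfl k
    rwa [cumX_zero, sub_zero] at this
  have hqmem : q ∈ stdSimplex ℝ (Fin n) := by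
    constructor
    · intro k
      exact div_nonneg (hcum0 k) hT.le
    · have hsum := cumX_diff_sum hx hxs le_rfl hT.le le_rfl
      simp only [cumX_zero, sub_zero] at hsum
      rw [hq]
      rw [← Finset.sum_div, hsum, div_self hT.ne']
  have hbdd : BddAbove {v | ∃ x ∈ stdSimplex ℝ (Fin n), v = ⨅ j, ∑ k, x k * A k j} :=
    ⟨MA A, fun v hv => valSet_mem_le hm hv⟩
  have hvle : (⨅ j, ∑ k, q k * A k j) ≤ gameValue A :=
    le_csSup hbdd ⟨q, hqmem, rfl⟩
  have hWT := Wf_pos hm η A x T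
  have hj : ∀ j : Fin m, -(Phi η A x T) / T ≤ ∑ k, q k * A k j := by
    intro j
    have hsingle : Real.exp (η * (0 - ∑ k, cumX x T k * A k j)) ≤ Wf η A x T :=
      Finset.single_le_sum (f := fun j => Real.exp (η * (0 - ∑ k, cumX x T k * A k j)))
        (fun j _ => (Real.exp_pos _).le) (Finset.mem_univ j)
    have hlog : η * (0 - ∑ k, cumX x T k * A k j) ≤ Real.log (Wf η A x T) :=
      (Real.le_log_iff_exp_le hWT).2 hsingle
    have hPhi : (0 - ∑ k, cumX x T k * A k j) ≤ Phi η A x T := by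
      rw [Phi, le_div_iff₀ hη]
      calc (0 - ∑ k, cumX x T k * A k j) * η = η * (0 - ∑ k, cumX x T k * A k j) := by ring
      _ ≤ Real.log (Wf η A x T) := hlog
    have hqA : ∑ k, cumX x T k * A k j = T * ∑ k, q k * A k j := by
      rw [hq, Finset.mul_sum]
      refine Finset.sum_congr rfl fun k _ => ?_
      field_simp
    rw [div_le_iff₀ hT]
    rw [hqA] at hPhi
    nlinarith [hPhi]
  have hinf : -(Phi η A x T) / T ≤ ⨅ j, ∑ k, q k * A k j := by
    have : Nonempty (Fin m) := ⟨⟨0, hm⟩⟩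
    exact le_ciInf hj
  have hPhiT : -(T * gameValue A) ≤ Phi η A x T := by
    have h1 : -(Phi η A x T) ≤ T * (⨅ j, ∑ k, q k * A k j) := by
      rw [div_le_iff₀ hT] at hinf
      nlinarith [hinf]
    have h2 : T * (⨅ j, ∑ k, q k * A k j) ≤ T * gameValue A :=
      mul_le_mul_of_nonneg_left hvle hT.le
    linarith
  rw [Rcont]
  calc (∫ t in (0:ℝ)..T, ∑ k, ∑ i, x t k * A k i * contPlay η A (fun _ => 0) x t i)
      ≤ Phi η A x 0 - Phi η A x T := hmain
  _ ≤ Real.log m / η + T * gameValue A := by rw [h0]; linarith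
  _ = T * gameValue A + Real.log m / η := by ring

end Stmt2Aux

namespace Stmt2Aux
variable {n m : ℕ} {T : ℝ} {η : ℝ} {A : Matrix (Fin n) (Fin m) ℝ}

lemma const_lower (hm : 0 < m) (hη : 0 < η) (hT : 0 < T)
    {xs : Fin n → ℝ} (hxs : xs ∈ stdSimplex ℝ (Fin n)) :
    T * (⨅ j, ∑ k, xs k * A k j) ≤ Rcont η A (fun _ => 0) T (fun _ => xs) := by
  haveI : Nonempty (Fin m) := ⟨⟨0, hm⟩⟩
  set xc : ℝ → Fin n → ℝ := fun _ => xs with hxc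
  set v := ⨅ j, ∑ k, xs k * A k j with hv
  have hcum : ∀ (k : Fin n) (t : ℝ), cumX xc t k = t * xs k := by
    intro k t
    simp [cumX, hxc]
  have hycont : ∀ i, Continuous (fun t => contPlay η A (fun _ => 0) xc t i) := by
    intro i
    simp only [contPlay_eq]
    have hnum : ∀ j : Fin m, Continuous
        (fun t => Real.exp (η * (0 - ∑ k, cumX xc t k * A k j))) := by
      intro j
      refine Real.continuous_exp.comp ?_
      refine Continuous.mul continuous_const ?_
      refine Continuous.sub continuous_const ?_
      refine continuous_finset_sum _ fun k _ => ?_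
      simp only [hcum]
      exact (continuous_id.mul continuous_const).mul continuous_const
    exact (hnum i).div (continuous_finset_sum _ fun j _ => hnum j)
      fun t => (Wf_pos hm η A xc t).ne'
  have hrcont : Continuous
      (fun t => ∑ k, ∑ i, xc t k * A k i * contPlay η A (fun _ => 0) xc t i) := by
    refine continuous_finset_sum _ fun k _ => continuous_finset_sum _ fun i _ => ?_
    exact (continuous_const.mul continuous_const).mul (hycont i)
  have hpt : ∀ t : ℝ, v ≤ ∑ k, ∑ i, xc t k * A k i * contPlay η A (fun _ => 0) xc t i := by
    intro t
    have hy0 := contPlay_nonneg hm η A xc t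
    have hy1 := contPlay_sum hm η A xc t
    have hre : ∑ k, ∑ i, xc t k * A k i * contPlay η A (fun _ => 0) xc t i
        = ∑ i, (∑ k, xs k * A k i) * contPlay η A (fun _ => 0) xc t i := by
      rw [Finset.sum_comm]
      refine Finset.sum_congr rfl fun i _ => ?_
      rw [Finset.sum_mul]
    rw [hre]
    calc v = ∑ i, v * contPlay η A (fun _ => 0) xc t i := by
          rw [← Finset.mul_sum, hy1, mul_one]
    _ ≤ ∑ i, (∑ k, xs k * A k i) * contPlay η A (fun _ => 0) xc t i := by
          refine Finset.sum_le_sum fun i _ => ?_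
          refine mul_le_mul_of_nonneg_right ?_ (hy0 i)
          exact ciInf_le (Set.Finite.bddBelow (Set.finite_range _)) i
  rw [Rcont]
  have hmono := intervalIntegral.integral_mono_on (μ := volume) hT.le
    (intervalIntegrable_const (c := v))
    (hrcont.intervalIntegrable 0 T) (fun t _ => hpt t)
  rw [intervalIntegral.integral_const, smul_eq_mul, sub_zero] at hmono
  exact hmono

end Stmt2Aux

/-- `T·Val(A) ≤ R*_cont(0,T) ≤ T·Val(A) + ln(m)/η`. -/
theorem stmt2 {n m : ℕ} (hn : 0 < n) (hm : 0 < m) (η T : ℝ) (hη : 0 < η) (hT : 0 < T)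
    (A : Matrix (Fin n) (Fin m) ℝ) :
    T * gameValue A ≤ RcontStar η A (fun _ => 0) T ∧
    RcontStar η A (fun _ => 0) T ≤ T * gameValue A + Real.log m / η := by
  classical
  set RSet := {r | ∃ x : ℝ → Fin n → ℝ, Measurable x ∧
    (∀ t ∈ Set.Icc (0:ℝ) T, x t ∈ stdSimplex ℝ (Fin n)) ∧ r = Rcont η A (fun _ => 0) T x}
    with hRSet
  have hRub : ∀ r ∈ RSet, r ≤ T * gameValue A + Real.log m / η := by
    rintro r ⟨x, hxm, hxs, rfl⟩
    exact Stmt2Aux.Rcont_le hn hm hη hT hxm hxs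
  have hRne : RSet.Nonempty := by
    refine ⟨Rcont η A (fun _ => 0) T (fun _ _ => (n:ℝ)⁻¹), ?_⟩
    exact ⟨fun _ _ => (n:ℝ)⁻¹, measurable_const, fun t _ => Stmt2Aux.uniform_mem hn, rfl⟩
  have hRbdd : BddAbove RSet := ⟨T * gameValue A + Real.log m / η, hRub⟩
  have hstar : RcontStar η A (fun _ => 0) T = sSup RSet := rfl
  constructor
  · -- lower bound
    have hvle : ∀ v ∈ {v | ∃ x ∈ stdSimplex ℝ (Fin n), v = ⨅ j, ∑ k, x k * A k j},
        v ≤ RcontStar η A (fun _ => 0) T / T := by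
      rintro v ⟨xs, hxs, rfl⟩
      rw [le_div_iff₀ hT]
      have h1 := Stmt2Aux.const_lower (A := A) hm hη hT hxs
      have h2 : Rcont η A (fun _ => 0) T (fun _ => xs) ≤ RcontStar η A (fun _ => 0) T := by
        rw [hstar]
        exact le_csSup hRbdd ⟨fun _ => xs, measurable_const, fun t _ => hxs, rfl⟩
      calc (⨅ j, ∑ k, xs k * A k j) * T = T * (⨅ j, ∑ k, xs k * A k j) := by ring
      _ ≤ RcontStar η A (fun _ => 0) T := h1.trans h2
    have hval : gameValue A ≤ RcontStar η A (fun _ => 0) T / T :=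
      csSup_le (Stmt2Aux.valSet_nonempty (A := A) hn) hvle
    calc T * gameValue A ≤ T * (RcontStar η A (fun _ => 0) T / T) :=
          mul_le_mul_of_nonneg_left hval hT.le
    _ = RcontStar η A (fun _ => 0) T := by field_simp
  · rw [hstar]
    exact csSup_le hRne hRub
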